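/- arXiv:math/0401053 — 2 statements merged into one kernel-verified Lean document; each statement's English description precedes it below -/
import Mathlib

section
/- With respect to the distribution μ^{(θ)} one has ∑_{z∈ℤ} μ^{(θ)}(z)·r(z) = e^{θ} and ∑_{z∈ℤ} μ^{(θ)}(z)·r(−z) = e^{−θ} (both families being summable); consequently ∑_{z∈ℤ} μ^{(θ)}(z)·(r(z)+r(−z)) = 2·cosh(θ). -/
set_option maxHeartbeats 1000000

open Real

/-- The generalized factorial `r(z)! := ∏_{y=1}^{|z|} r(y)`. -/
noncomputable def rfact (r : ℤ → ℝ) (z : ℤ) : ℝ :=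
  ∏ y ∈ Finset.range z.natAbs, r (y + 1)

/-- The partition function `Z(θ) := ∑_{z ∈ ℤ} e^{θ z} / r(z)!`. -/
noncomputable def Zfun (r : ℤ → ℝ) (θ : ℝ) : ℝ :=
  ∑' z : ℤ, Real.exp (θ * z) / rfact r z

/-- The single-site probability mass function `μ^{(θ)}(z) := e^{θ z} / (Z(θ) r(z)!)`. -/
noncomputable def mu (r : ℤ → ℝ) (θ : ℝ) (z : ℤ) : ℝ :=
  Real.exp (θ * z) / (Zfun r θ * rfact r z)

noncomputable def gfun (r : ℤ → ℝ) (θ : ℝ) (z : ℤ) : ℝ := Real.exp (θ * z) / rfact r z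

lemma rfact_pos (r : ℤ → ℝ) (hpos : ∀ z : ℤ, 0 < r z) (z : ℤ) : 0 < rfact r z :=
  Finset.prod_pos fun _ _ => hpos _

lemma rfact_key (r : ℤ → ℝ) (hpos : ∀ z : ℤ, 0 < r z)
    (hrel : ∀ z : ℤ, r z * r (-z + 1) = 1) (z : ℤ) :
    rfact r (z - 1) * r z = rfact r z := by
  rcases le_or_gt 1 z with h | h
  · have hn : z.natAbs = (z - 1).natAbs + 1 := by omega
    have hc : ((z - 1).natAbs : ℤ) + 1 = z := by omega
    rw [rfact, rfact, hn, Finset.prod_range_succ, hc]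
  · have hn : (z - 1).natAbs = z.natAbs + 1 := by omega
    have hc : ((z.natAbs : ℤ)) + 1 = -z + 1 := by omega
    rw [rfact, hn, Finset.prod_range_succ, hc]
    show rfact r z * r (-z + 1) * r z = rfact r z
    rw [mul_assoc, mul_comm (r (-z+1)), hrel z, mul_one]

theorem expectation_of_rates (r : ℤ → ℝ) (hpos : ∀ z : ℤ, 0 < r z)
    (hrel : ∀ z : ℤ, r z * r (-z + 1) = 1) (θ : ℝ)
    (hZ : Summable (fun z : ℤ => Real.exp (θ * z) / rfact r z)) :
    Summable (fun z : ℤ => mu r θ z * r z) ∧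
    (∑' z : ℤ, mu r θ z * r z) = Real.exp θ ∧
    Summable (fun z : ℤ => mu r θ z * r (-z)) ∧
    (∑' z : ℤ, mu r θ z * r (-z)) = Real.exp (-θ) ∧
    (∑' z : ℤ, mu r θ z * (r z + r (-z))) = 2 * Real.cosh θ := by
  have hZ' : Summable (gfun r θ) := hZ
  have hZpos : 0 < Zfun r θ := by
    refine Summable.tsum_pos hZ (fun z => div_nonneg (Real.exp_pos _).le (rfact_pos r hpos z).le) 0 ?_
    show (0:ℝ) < Real.exp (θ * (0:ℤ)) / rfact r 0
    simp [rfact]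
  -- key pointwise identities
  have hf1 : ∀ z : ℤ, mu r θ z * r z = Real.exp θ / Zfun r θ * gfun r θ (z - 1) := by
    intro z
    have hk := rfact_key r hpos hrel z
    have h1 : (rfact r (z - 1)) ≠ 0 := (rfact_pos r hpos _).ne'
    have h2 : (rfact r z) ≠ 0 := (rfact_pos r hpos _).ne'
    have h3 : r z ≠ 0 := (hpos z).ne'
    have he : θ * z = θ * ((z : ℝ) - 1) + θ := by ring
    have he2 : ((z - 1 : ℤ) : ℝ) = (z : ℝ) - 1 := by push_cast; ring
    rw [mu, gfun]
    rw [he2, he, Real.exp_add, ← hk]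
    field_simp
  have hf2 : ∀ z : ℤ, mu r θ z * r (-z) = Real.exp (-θ) / Zfun r θ * gfun r θ (z + 1) := by
    intro z
    have hk := rfact_key r hpos hrel (z + 1)
    have hx : z + 1 - 1 = z := by ring
    rw [hx] at hk
    have hrz : r (-z) * r (z + 1) = 1 := by have := hrel (-z); simpa using this
    have h1 : (rfact r (z + 1)) ≠ 0 := (rfact_pos r hpos _).ne'
    have h2 : (rfact r z) ≠ 0 := (rfact_pos r hpos _).ne'
    have h3 : r (z + 1) ≠ 0 := (hpos _).ne'
    have hrz' : r (-z) = 1 / r (z + 1) := by rw [eq_div_iff h3]; exact hrz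
    have he : θ * ((z : ℝ) + 1) = θ * z + θ := by ring
    have he2 : ((z + 1 : ℤ) : ℝ) = (z : ℝ) + 1 := by push_cast; ring
    rw [mu, gfun]
    rw [he2, hrz', he, Real.exp_add, ← hk]
    rw [Real.exp_neg]
    field_simp
  -- summability and sums via translation equivalences
  have hs1 : Summable (fun z : ℤ => gfun r θ (z - 1)) := by
    have h2 := ((Equiv.subRight (1 : ℤ)).summable_iff (f := gfun r θ)).mpr hZ'
    simpa [Function.comp_def] using h2
  have hs2 : Summable (fun z : ℤ => gfun r θ (z + 1)) := by
    have h2 := ((Equiv.addRight (1 : ℤ)).summable_iff (f := gfun r θ)).mpr hZ'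
    simpa [Function.comp_def] using h2
  have hZg : Zfun r θ = ∑' z : ℤ, gfun r θ z := by rw [Zfun]; rfl
  have ht1 : (∑' z : ℤ, gfun r θ (z - 1)) = Zfun r θ := by
    rw [hZg]
    have h2 := (Equiv.subRight (1 : ℤ)).tsum_eq (gfun r θ)
    simpa [Function.comp] using h2
  have ht2 : (∑' z : ℤ, gfun r θ (z + 1)) = Zfun r θ := by
    rw [hZg]
    have h2 := (Equiv.addRight (1 : ℤ)).tsum_eq (gfun r θ)
    simpa [Function.comp] using h2
  have hS1 : Summable (fun z : ℤ => mu r θ z * r z) := by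
    simpa only [hf1] using hs1.mul_left (Real.exp θ / Zfun r θ)
  have hS2 : Summable (fun z : ℤ => mu r θ z * r (-z)) := by
    simpa only [hf2] using hs2.mul_left (Real.exp (-θ) / Zfun r θ)
  have hT1 : (∑' z : ℤ, mu r θ z * r z) = Real.exp θ := by
    simp only [hf1]
    rw [tsum_mul_left, ht1]
    field_simp
  have hT2 : (∑' z : ℤ, mu r θ z * r (-z)) = Real.exp (-θ) := by
    simp only [hf2]
    rw [tsum_mul_left, ht2]
    field_simp
  refine ⟨hS1, hT1, hS2, hT2, ?_⟩
  have : (∑' z : ℤ, mu r θ z * (r z + r (-z)))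
      = (∑' z : ℤ, mu r θ z * r z) + ∑' z : ℤ, mu r θ z * r (-z) := by
    rw [← hS1.tsum_add hS2]
    congr 1; ext z; ring
  rw [this, hT1, hT2, Real.cosh_eq]; ring
end

section
/- (Theorem 4.1, exponential case.) Let r(z) = e^{−β/2}·e^{βz} with β > 0, let θ_j ∈ ℝ for j ∈ ℤ, let μ^{(θ̲)} be the product probability measure on ℤ^ℤ with j-th marginal μ^{(θ_j)}, and let φ : ℤ^ℤ → ℝ be bounded and measurable, depending only on the coordinates ω_l, …, ω_r for some integers l ≤ r. Then ∑_{i=l−1}^{r} ∫ (r(ω_i)+r(−ω_{i+1}))·(φ(ω^{(i,i+1)}) − φ(ω)) dμ^{(θ̲)}(ω) = ∑_{i=l−1}^{r−1} (e^{θ_i} − e^{θ_{i+1}})·( ∫ φ dμ^{(θ̲^{(i+1,+)})} − ∫ φ dμ^{(θ̲)} ) + ∑_{i=l+1}^{r+1} (e^{−θ_i} − e^{−θ_{i−1}})·( ∫ φ dμ^{(θ̲^{(i−1,−)})} − ∫ φ dμ^{(θ̲)} ), where θ̲^{(i,±)} is obtained from θ̲ by replacing θ_i with θ_i ± β. -/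
open Real MeasureTheory

/-- `ω^{(i,i+1)}`: a brick is laid on the column over `(i, i+1)`; coordinate `i`
decreases by one and coordinate `i+1` increases by one. -/
def brickCfg (ω : ℤ → ℤ) (i : ℤ) : ℤ → ℤ :=
  fun j => if j = i then ω i - 1 else if j = i + 1 then ω (i + 1) + 1 else ω j

/-- `ω^{(i,+)}`: only coordinate `i` is changed, to `ω i + 1`. -/
def upCfg (ω : ℤ → ℤ) (i : ℤ) : ℤ → ℤ := Function.update ω i (ω i + 1)

/-- `ω^{(i,-)}`: only coordinate `i` is changed, to `ω i - 1`. -/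
def downCfg (ω : ℤ → ℤ) (i : ℤ) : ℤ → ℤ := Function.update ω i (ω i - 1)

/-- `IsProductMeasure r η P` means: `P` is the product probability measure on `ℤ^ℤ`
whose `i`-th marginal is the single-site measure `μ^{(η i)}`, characterized by its
values on cylinder sets. -/
def IsProductMeasure (r : ℤ → ℝ) (η : ℤ → ℝ) (P : Measure (ℤ → ℤ)) : Prop :=
  IsProbabilityMeasure P ∧
    ∀ (s : Finset ℤ) (c : ℤ → ℤ),
      P {ω : ℤ → ℤ | ∀ i ∈ s, ω i = c i} = ∏ i ∈ s, ENNReal.ofReal (mu r (η i) (c i))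

/-! ### Auxiliary material -/

section pointwise

variable {β : ℝ} {r : ℤ → ℝ}

set_option maxHeartbeats 1000000 in
lemma summable_gauss_nat (β : ℝ) (hβ : 0 < β) (c : ℝ) :
    Summable fun n : ℕ => Real.exp (c * n - β * n ^ 2 / 2) := by
  apply summable_of_isBigO_nat Real.summable_exp_neg_nat
  rw [Real.isBigO_exp_comp_exp_comp]
  apply Filter.Tendsto.isBoundedUnder_le_atBot
  simp_rw [← Filter.tendsto_neg_atTop_iff, Pi.sub_apply]
  conv =>
    enter [1, n]
    rw [show -((c * n - β * n ^ 2 / 2) - (-(n:ℝ))) = (n : ℝ) * (β / 2 * n + (-(c + 1))) by ring]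
  have h1 : Filter.Tendsto (fun n : ℕ => β / 2 * (n : ℝ)) Filter.atTop Filter.atTop :=
    Filter.Tendsto.const_mul_atTop (by positivity) tendsto_natCast_atTop_atTop
  have h2 : Filter.Tendsto (fun n : ℕ => β / 2 * (n : ℝ) + (-(c + 1))) Filter.atTop
      Filter.atTop := Filter.tendsto_atTop_add_const_right _ _ h1
  exact Filter.Tendsto.atTop_mul_atTop₀ tendsto_natCast_atTop_atTop h2

lemma summable_gauss (β : ℝ) (hβ : 0 < β) (θ : ℝ) :
    Summable fun z : ℤ => Real.exp (θ * z - β * z ^ 2 / 2) := by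
  apply Summable.of_nat_of_neg
  · simpa using summable_gauss_nat β hβ θ
  · have := summable_gauss_nat β hβ (-θ)
    apply this.congr
    intro n
    push_cast
    ring_nf

variable (hβ : 0 < β) (hr : ∀ z : ℤ, r z = Real.exp (-β / 2) * Real.exp (β * z))
include hβ hr

omit hβ in
lemma rfact_eq (z : ℤ) : rfact r z = Real.exp (β * z ^ 2 / 2) := by
  have key : ∀ n : ℕ, ∏ y ∈ Finset.range n, r (y + 1) = Real.exp (β * n ^ 2 / 2) := by
    intro n
    induction n with
    | zero => simp
    | succ n ih =>
      rw [Finset.prod_range_succ, ih, hr, ← Real.exp_add, ← Real.exp_add]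
      congr 1
      push_cast
      ring
  rw [rfact, key]
  congr 1
  push_cast [Nat.cast_natAbs, Int.cast_abs]
  rw [sq_abs]

omit hβ in
lemma Zfun_eq (θ : ℝ) : Zfun r θ = ∑' z : ℤ, Real.exp (θ * z - β * z ^ 2 / 2) := by
  apply tsum_congr
  intro z
  rw [rfact_eq hr, Real.exp_sub]

lemma Zfun_pos (θ : ℝ) : 0 < Zfun r θ := by
  rw [Zfun_eq hr]
  have hs := summable_gauss β hβ θ
  exact hs.tsum_pos (fun z => (Real.exp_pos _).le) 0 (Real.exp_pos _)

omit hβ in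
lemma Zfun_shift (θ : ℝ) : Zfun r (θ + β) = Real.exp (θ + β / 2) * Zfun r θ := by
  rw [Zfun_eq hr, Zfun_eq hr, ← tsum_mul_left]
  rw [← (Equiv.subRight (1 : ℤ)).tsum_eq
    (fun z : ℤ => Real.exp (θ + β / 2) * Real.exp (θ * z - β * z ^ 2 / 2))]
  apply tsum_congr
  intro z
  simp only [Equiv.subRight_apply]
  rw [← Real.exp_add]
  congr 1
  push_cast
  ring

omit hβ in
lemma mu_eq (θ : ℝ) (z : ℤ) :
    mu r θ z = Real.exp (θ * z - β * z ^ 2 / 2) / Zfun r θ := by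
  rw [mu, rfact_eq hr, Real.exp_sub, div_div]
  ring

lemma mu_nonneg (θ : ℝ) (z : ℤ) : 0 ≤ mu r θ z := by
  rw [mu_eq hr]
  exact div_nonneg (Real.exp_pos _).le (Zfun_pos hβ hr θ).le

lemma mu_shift (θ : ℝ) (z : ℤ) : mu r (θ + β) z = mu r θ (z - 1) := by
  rw [mu_eq hr, mu_eq hr, Zfun_shift hr]
  rw [div_eq_div_iff (mul_pos (Real.exp_pos _) (Zfun_pos hβ hr θ)).ne'
    (ne_of_gt (Zfun_pos hβ hr θ))]
  have h : Real.exp ((θ + β) * z - β * z ^ 2 / 2)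
      = Real.exp (θ + β / 2) * Real.exp (θ * (z - 1 : ℤ) - β * ((z : ℝ) - 1) ^ 2 / 2) := by
    rw [← Real.exp_add]; congr 1; push_cast; ring
  push_cast at h ⊢
  rw [h]
  ring

lemma mu_shift' (θ : ℝ) (z : ℤ) : mu r θ (z + 1) = mu r (θ - β) z := by
  have := mu_shift hβ hr (θ - β) (z + 1)
  simp only [sub_add_cancel, add_sub_cancel_right] at this
  exact this

lemma r_mul_mu (θ : ℝ) (z : ℤ) :
    r z * mu r θ z = Real.exp θ * mu r (θ + β) z := by
  rw [mu_eq hr, mu_eq hr, Zfun_shift hr, hr, mul_div_assoc', mul_div_assoc',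
    div_eq_div_iff (ne_of_gt (Zfun_pos hβ hr θ))
      (mul_pos (Real.exp_pos _) (Zfun_pos hβ hr θ)).ne']
  have h : Real.exp (-β / 2) * Real.exp (β * z) * Real.exp (θ * z - β * z ^ 2 / 2) *
      Real.exp (θ + β / 2) = Real.exp θ * Real.exp ((θ + β) * z - β * z ^ 2 / 2) := by
    rw [← Real.exp_add, ← Real.exp_add, ← Real.exp_add, ← Real.exp_add]; congr 1; ring
  linear_combination Zfun r θ * h

lemma rneg_mul_mu (θ : ℝ) (z : ℤ) :
    r (-z) * mu r θ z = Real.exp (-θ) * mu r (θ - β) z := by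
  have hZ : Zfun r θ = Real.exp (θ - β + β / 2) * Zfun r (θ - β) := by
    have := Zfun_shift hr (θ - β)
    rw [sub_add_cancel] at this
    rw [this]
  rw [mu_eq hr, mu_eq hr, hZ, hr, mul_div_assoc', mul_div_assoc',
    div_eq_div_iff (mul_pos (Real.exp_pos _) (Zfun_pos hβ hr (θ - β))).ne'
      (ne_of_gt (Zfun_pos hβ hr (θ - β)))]
  have h : Real.exp (-β / 2) * Real.exp (β * (-z : ℤ)) * Real.exp (θ * z - β * z ^ 2 / 2)
      = Real.exp (-θ) * Real.exp ((θ - β) * z - β * z ^ 2 / 2) * Real.exp (θ - β + β / 2) := by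
    rw [← Real.exp_add, ← Real.exp_add, ← Real.exp_add, ← Real.exp_add]; congr 1; push_cast; ring
  linear_combination Zfun r (θ - β) * h

end pointwise

section cylinder

/-- extension of a finitely-supported configuration by `0`. -/
def extFn (s : Finset ℤ) (c : {x // x ∈ s} → ℤ) : ℤ → ℤ :=
  fun j => if h : j ∈ s then c ⟨j, h⟩ else 0

/-- cylinder set determined by the values `c` on `s`. -/
def cylSet (s : Finset ℤ) (c : {x // x ∈ s} → ℤ) : Set (ℤ → ℤ) :=
  {ω | ∀ i ∈ s, ω i = extFn s c i}

/-- the product weight. -/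
noncomputable def Wt (r : ℤ → ℝ) (s : Finset ℤ) (η : ℤ → ℝ) (c : {x // x ∈ s} → ℤ) : ℝ :=
  ∏ i ∈ s.attach, mu r (η i.1) (c i)

variable {r : ℤ → ℝ} {η : ℤ → ℝ} {P : Measure (ℤ → ℤ)}

lemma extFn_mem (s : Finset ℤ) (c : {x // x ∈ s} → ℤ) (i : {x // x ∈ s}) :
    extFn s c i.1 = c i := by
  simp [extFn, i.2]

lemma measurableSet_cylSet (s : Finset ℤ) (c : {x // x ∈ s} → ℤ) :
    MeasurableSet (cylSet s c) := by
  have : cylSet s c = ⋂ i ∈ s, {ω : ℤ → ℤ | ω i = extFn s c i} := by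
    ext ω; simp [cylSet, Set.mem_iInter]
  rw [this]
  refine MeasurableSet.biInter s.countable_toSet (fun i _ => ?_)
  exact measurableSet_eq_fun (measurable_pi_apply i) measurable_const

lemma pairwise_cylSet (s : Finset ℤ) :
    Pairwise (Function.onFun Disjoint (cylSet s)) := by
  intro c c' hne
  rw [Function.onFun, Set.disjoint_left]
  intro ω hω hω'
  apply hne
  funext i
  have h1 := hω i.1 i.2
  have h2 := hω' i.1 i.2
  rw [extFn_mem] at h1 h2
  rw [← h1, ← h2]

lemma iUnion_cylSet (s : Finset ℤ) : ⋃ c, cylSet s c = Set.univ := by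
  ext ω
  simp only [Set.mem_iUnion, Set.mem_univ, iff_true]
  exact ⟨fun i => ω i.1, fun i hi => by simpa using (extFn_mem s (fun j => ω j.1) ⟨i, hi⟩).symm⟩

variable {β : ℝ} (hβ : 0 < β) (hr : ∀ z : ℤ, r z = Real.exp (-β / 2) * Real.exp (β * z))
include hβ hr

lemma Wt_nonneg (s : Finset ℤ) (η : ℤ → ℝ) (c : {x // x ∈ s} → ℤ) : 0 ≤ Wt r s η c :=
  Finset.prod_nonneg fun i _ => mu_nonneg hβ hr _ _

lemma measure_cylSet (hP : IsProductMeasure r η P) (s : Finset ℤ) (c : {x // x ∈ s} → ℤ) :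
    P (cylSet s c) = ENNReal.ofReal (Wt r s η c) := by
  have := hP.2 s (extFn s c)
  rw [show {ω : ℤ → ℤ | ∀ i ∈ s, ω i = extFn s c i} = cylSet s c from rfl] at this
  rw [this, Wt, ENNReal.ofReal_prod_of_nonneg (fun i _ => mu_nonneg hβ hr _ _)]
  rw [← Finset.prod_attach s (fun i => ENNReal.ofReal (mu r (η i) (extFn s c i)))]
  exact Finset.prod_congr rfl fun i _ => by rw [extFn_mem]

omit hβ hr in
lemma tsum_measure_cylSet (hP : IsProductMeasure r η P) (s : Finset ℤ) :
    ∑' c : {x // x ∈ s} → ℤ, P (cylSet s c) = 1 := by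
  have := hP.1
  rw [← measure_iUnion (pairwise_cylSet s) (measurableSet_cylSet s), iUnion_cylSet,
    measure_univ]

lemma summable_Wt (hP : IsProductMeasure r η P) (s : Finset ℤ) :
    Summable (Wt r s η) := by
  have h1 : ∑' c : {x // x ∈ s} → ℤ, P (cylSet s c) ≠ ⊤ := by
    rw [tsum_measure_cylSet hP s]; exact ENNReal.one_ne_top
  have h2 := ENNReal.summable_toReal h1
  apply h2.congr
  intro c
  rw [measure_cylSet hβ hr hP s c, ENNReal.toReal_ofReal (Wt_nonneg hβ hr s η c)]

lemma cyl_rep (hP : IsProductMeasure r η P) (s : Finset ℤ)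
    (ψ : (ℤ → ℤ) → ℝ) (hm : Measurable ψ)
    (hdep : ∀ ω ω' : ℤ → ℤ, (∀ i ∈ s, ω i = ω' i) → ψ ω = ψ ω')
    (hsum : Summable (fun c : {x // x ∈ s} → ℤ => |ψ (extFn s c)| * Wt r s η c)) :
    Integrable ψ P ∧ ∫ ω, ψ ω ∂P = ∑' c : {x // x ∈ s} → ℤ, ψ (extFn s c) * Wt r s η c := by
  have hconst : ∀ (c : {x // x ∈ s} → ℤ) (ω : ℤ → ℤ), ω ∈ cylSet s c → ψ ω = ψ (extFn s c) :=
    fun c ω hω => hdep ω (extFn s c) hω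
  have hWnn := Wt_nonneg hβ hr s η
  have hlin : ∫⁻ ω, (‖ψ ω‖₊ : ENNReal) ∂P
      = ∑' c : {x // x ∈ s} → ℤ, (‖ψ (extFn s c)‖₊ : ENNReal) * P (cylSet s c) := by
    rw [← setLIntegral_univ, ← iUnion_cylSet s,
      lintegral_iUnion (measurableSet_cylSet s) (pairwise_cylSet s)]
    apply tsum_congr
    intro c
    rw [setLIntegral_congr_fun (measurableSet_cylSet s c)
      (fun ω hω => by rw [hconst c ω hω]),
      setLIntegral_const]
  have hint : Integrable ψ P := by
    refine ⟨hm.aestronglyMeasurable, ?_⟩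
    rw [hasFiniteIntegral_def]
    change ∫⁻ ω, (‖ψ ω‖₊ : ENNReal) ∂P < ⊤
    rw [hlin]
    have heq : ∀ c : {x // x ∈ s} → ℤ, (‖ψ (extFn s c)‖₊ : ENNReal) * P (cylSet s c)
        = ENNReal.ofReal (|ψ (extFn s c)| * Wt r s η c) := by
      intro c
      rw [measure_cylSet hβ hr hP s c, ← enorm_eq_nnnorm, Real.enorm_eq_ofReal_abs,
        ← ENNReal.ofReal_mul (abs_nonneg _)]
    rw [tsum_congr heq, ← ENNReal.ofReal_tsum_of_nonneg
      (fun c => mul_nonneg (abs_nonneg _) (hWnn c)) hsum]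
    exact ENNReal.ofReal_lt_top
  refine ⟨hint, ?_⟩
  rw [← setIntegral_univ, ← iUnion_cylSet s,
    integral_iUnion (measurableSet_cylSet s) (pairwise_cylSet s) hint.integrableOn]
  apply tsum_congr
  intro c
  rw [setIntegral_congr_fun (measurableSet_cylSet s c) (fun ω hω => hconst c ω hω),
    setIntegral_const, measureReal_def, measure_cylSet hβ hr hP s c,
    ENNReal.toReal_ofReal (hWnn c), smul_eq_mul, mul_comm]

end cylinder

section shift

/-- the coordinate shift on finite configurations corresponding to laying a brick at `(i,i+1)`. -/
def shiftEquiv (S : Finset ℤ) (i : ℤ) : ({x // x ∈ S} → ℤ) ≃ ({x // x ∈ S} → ℤ) where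
  toFun c := fun j => if (j : ℤ) = i then c j - 1 else if (j : ℤ) = i + 1 then c j + 1 else c j
  invFun d := fun j => if (j : ℤ) = i then d j + 1 else if (j : ℤ) = i + 1 then d j - 1 else d j
  left_inv c := by funext j; simp only; split_ifs <;> omega
  right_inv d := by funext j; simp only; split_ifs <;> omega

variable {β : ℝ} {r : ℤ → ℝ}
variable (hβ : 0 < β) (hr : ∀ z : ℤ, r z = Real.exp (-β / 2) * Real.exp (β * z))
include hβ hr

lemma Wt_r_mul (S : Finset ℤ) (θ : ℤ → ℝ) (j₀ : ℤ) (hj : j₀ ∈ S) (c : {x // x ∈ S} → ℤ) :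
    r (c ⟨j₀, hj⟩) * Wt r S θ c
      = Real.exp (θ j₀) * Wt r S (Function.update θ j₀ (θ j₀ + β)) c := by
  have hmem : (⟨j₀, hj⟩ : {x // x ∈ S}) ∈ S.attach := Finset.mem_attach _ _
  rw [Wt, Wt, ← Finset.mul_prod_erase _ _ hmem, ← Finset.mul_prod_erase _ _ hmem]
  have hprod : ∏ x ∈ S.attach.erase ⟨j₀, hj⟩, mu r (Function.update θ j₀ (θ j₀ + β) x.1) (c x)
      = ∏ x ∈ S.attach.erase ⟨j₀, hj⟩, mu r (θ x.1) (c x) := by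
    refine Finset.prod_congr rfl fun x hx => ?_
    rw [Function.update_of_ne (fun h => (Finset.mem_erase.mp hx).1 (Subtype.ext h))]
  rw [hprod, Function.update_self, ← mul_assoc, ← mul_assoc, r_mul_mu hβ hr]

lemma Wt_rneg_mul (S : Finset ℤ) (θ : ℤ → ℝ) (j₀ : ℤ) (hj : j₀ ∈ S) (c : {x // x ∈ S} → ℤ) :
    r (-(c ⟨j₀, hj⟩)) * Wt r S θ c
      = Real.exp (-(θ j₀)) * Wt r S (Function.update θ j₀ (θ j₀ - β)) c := by
  have hmem : (⟨j₀, hj⟩ : {x // x ∈ S}) ∈ S.attach := Finset.mem_attach _ _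
  rw [Wt, Wt, ← Finset.mul_prod_erase _ _ hmem, ← Finset.mul_prod_erase _ _ hmem]
  have hprod : ∏ x ∈ S.attach.erase ⟨j₀, hj⟩, mu r (Function.update θ j₀ (θ j₀ - β) x.1) (c x)
      = ∏ x ∈ S.attach.erase ⟨j₀, hj⟩, mu r (θ x.1) (c x) := by
    refine Finset.prod_congr rfl fun x hx => ?_
    rw [Function.update_of_ne (fun h => (Finset.mem_erase.mp hx).1 (Subtype.ext h))]
  rw [hprod, Function.update_self, ← mul_assoc, ← mul_assoc, rneg_mul_mu hβ hr]

lemma Wt_shift_up (S : Finset ℤ) (i : ℤ) (θ : ℤ → ℝ) (d : {x // x ∈ S} → ℤ) :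
    Wt r S (Function.update θ i (θ i + β)) ((shiftEquiv S i).symm d)
      = Wt r S (Function.update θ (i + 1) (θ (i + 1) + β)) d := by
  refine Finset.prod_congr rfl fun x _ => ?_
  by_cases h1 : (x : ℤ) = i
  · have hval : ((shiftEquiv S i).symm d) x = d x + 1 := by
      simp only [shiftEquiv, Equiv.coe_fn_symm_mk]; rw [if_pos h1]
    rw [hval, h1, Function.update_self, Function.update_of_ne (by omega : i ≠ i + 1),
      mu_shift hβ hr]
    simp
  · by_cases h2 : (x : ℤ) = i + 1
    · have hval : ((shiftEquiv S i).symm d) x = d x - 1 := by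
        simp only [shiftEquiv, Equiv.coe_fn_symm_mk]; rw [if_neg h1, if_pos h2]
      rw [hval, h2, Function.update_of_ne (by omega : i + 1 ≠ i), Function.update_self,
        show d x - 1 = d x - 1 from rfl]
      rw [mu_shift hβ hr]
    · have hval : ((shiftEquiv S i).symm d) x = d x := by
        simp only [shiftEquiv, Equiv.coe_fn_symm_mk]; rw [if_neg h1, if_neg h2]
      rw [hval, Function.update_of_ne h1, Function.update_of_ne h2]

lemma Wt_shift_dn (S : Finset ℤ) (i : ℤ) (θ : ℤ → ℝ) (d : {x // x ∈ S} → ℤ) :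
    Wt r S (Function.update θ (i + 1) (θ (i + 1) - β)) ((shiftEquiv S i).symm d)
      = Wt r S (Function.update θ i (θ i - β)) d := by
  refine Finset.prod_congr rfl fun x _ => ?_
  by_cases h1 : (x : ℤ) = i
  · have hval : ((shiftEquiv S i).symm d) x = d x + 1 := by
      simp only [shiftEquiv, Equiv.coe_fn_symm_mk]; rw [if_pos h1]
    rw [hval, h1, Function.update_of_ne (by omega : i ≠ i + 1), Function.update_self,
      mu_shift' hβ hr]
  · by_cases h2 : (x : ℤ) = i + 1
    · have hval : ((shiftEquiv S i).symm d) x = d x - 1 := by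
        simp only [shiftEquiv, Equiv.coe_fn_symm_mk]; rw [if_neg h1, if_pos h2]
      rw [hval, h2, Function.update_self, Function.update_of_ne (by omega : i + 1 ≠ i)]
      have := mu_shift hβ hr (θ (i + 1) - β) (d x)
      rw [sub_add_cancel] at this
      rw [← this]
    · have hval : ((shiftEquiv S i).symm d) x = d x := by
        simp only [shiftEquiv, Equiv.coe_fn_symm_mk]; rw [if_neg h1, if_neg h2]
      rw [hval, Function.update_of_ne h1, Function.update_of_ne h2]

end shift

section sums

lemma sum_shift_Icc (u v t : ℤ) (f : ℤ → ℝ) :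
    ∑ i ∈ Finset.Icc u v, f i = ∑ i ∈ Finset.Icc (u + t) (v + t), f (i - t) := by
  apply Finset.sum_nbij' (fun i => i + t) (fun i => i - t) <;>
    intros <;> simp_all [Finset.mem_Icc] <;> omega

lemma Icc_insert_left (u v : ℤ) (h : u ≤ v + 1) :
    Finset.Icc (u - 1) v = insert (u - 1) (Finset.Icc u v) := by
  ext x; simp [Finset.mem_Icc]; omega

lemma Icc_insert_right (u v : ℤ) (h : u ≤ v + 1) :
    Finset.Icc u (v + 1) = insert (v + 1) (Finset.Icc u v) := by
  ext x; simp [Finset.mem_Icc]; omega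

lemma tele1 (a b : ℤ) (hab : a ≤ b) (F g : ℤ → ℝ) (hga : g (a - 1) = 0) (hgb : g (b + 1) = 0) :
    ∑ i ∈ Finset.Icc (a - 1) b, F i * (g (i + 1) - g i)
      = ∑ i ∈ Finset.Icc a b, (F (i - 1) - F i) * g i := by
  have hl : (a - 1) ∉ Finset.Icc a b := by simp only [Finset.mem_Icc]; omega
  have hrr : (b + 1) ∉ Finset.Icc a b := by simp only [Finset.mem_Icc]; omega
  have e1 : ∑ i ∈ Finset.Icc (a - 1) b, F i * g (i + 1)
      = ∑ i ∈ Finset.Icc a b, F (i - 1) * g i := by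
    rw [sum_shift_Icc (a - 1) b 1 (fun i => F i * g (i + 1))]
    rw [show a - 1 + 1 = a by ring, Icc_insert_right a b (by omega), Finset.sum_insert hrr]
    simp only [sub_add_cancel, hgb, mul_zero, zero_add]
  have e2 : ∑ i ∈ Finset.Icc (a - 1) b, F i * g i = ∑ i ∈ Finset.Icc a b, F i * g i := by
    rw [Icc_insert_left a b (by omega), Finset.sum_insert hl, hga, mul_zero, zero_add]
  simp only [mul_sub]
  rw [Finset.sum_sub_distrib, e1, e2, ← Finset.sum_sub_distrib]
  exact Finset.sum_congr rfl fun i _ => by ring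

lemma tele2 (a b : ℤ) (hab : a ≤ b) (F g : ℤ → ℝ) (hga : g (a - 1) = 0) (hgb : g (b + 1) = 0) :
    ∑ i ∈ Finset.Icc (a - 1) b, F (i + 1) * (g i - g (i + 1))
      = ∑ i ∈ Finset.Icc a b, (F (i + 1) - F i) * g i := by
  have hl : (a - 1) ∉ Finset.Icc a b := by simp only [Finset.mem_Icc]; omega
  have hrr : (b + 1) ∉ Finset.Icc a b := by simp only [Finset.mem_Icc]; omega
  have e1 : ∑ i ∈ Finset.Icc (a - 1) b, F (i + 1) * g i
      = ∑ i ∈ Finset.Icc a b, F (i + 1) * g i := by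
    rw [Icc_insert_left a b (by omega), Finset.sum_insert hl, hga, mul_zero, zero_add]
  have e2 : ∑ i ∈ Finset.Icc (a - 1) b, F (i + 1) * g (i + 1)
      = ∑ i ∈ Finset.Icc a b, F i * g i := by
    rw [sum_shift_Icc (a - 1) b 1 (fun i => F (i + 1) * g (i + 1))]
    rw [show a - 1 + 1 = a by ring, Icc_insert_right a b (by omega), Finset.sum_insert hrr]
    simp only [sub_add_cancel, hgb, mul_zero, zero_add]
  simp only [mul_sub]
  rw [Finset.sum_sub_distrib, e1, e2, ← Finset.sum_sub_distrib]
  exact Finset.sum_congr rfl fun i _ => by ring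

end sums

lemma measurable_of_int {α : Type*} [MeasurableSpace α] (f : ℤ → α) :
    Measurable f := fun _ _ => trivial

lemma measurable_eval_int {α : Type*} [MeasurableSpace α] (f : ℤ → α) (i : ℤ) :
    Measurable fun ω : ℤ → ℤ => f (ω i) :=
  (measurable_of_int f).comp (measurable_pi_apply i)

theorem measure_evolution_exponential (β : ℝ) (hβ : 0 < β) (r : ℤ → ℝ)
    (hr : ∀ z : ℤ, r z = Real.exp (-β / 2) * Real.exp (β * z))
    (θv : ℤ → ℝ)
    (M : (ℤ → ℝ) → Measure (ℤ → ℤ)) (hM : ∀ η : ℤ → ℝ, IsProductMeasure r η (M η))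
    (φ : (ℤ → ℤ) → ℝ) (hmeas : Measurable φ) (hbdd : ∃ C : ℝ, ∀ ω, |φ ω| ≤ C)
    (a b : ℤ) (hab : a ≤ b)
    (hdep : ∀ ω ω' : ℤ → ℤ, (∀ i : ℤ, a ≤ i → i ≤ b → ω i = ω' i) → φ ω = φ ω') :
    (∑ i ∈ Finset.Icc (a - 1) b,
        ∫ ω, (r (ω i) + r (-(ω (i + 1)))) * (φ (brickCfg ω i) - φ ω) ∂(M θv))
      = (∑ i ∈ Finset.Icc (a - 1) (b - 1),
          (Real.exp (θv i) - Real.exp (θv (i + 1))) *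
            ((∫ ω, φ ω ∂(M (Function.update θv (i + 1) (θv (i + 1) + β))))
              - ∫ ω, φ ω ∂(M θv)))
        + ∑ i ∈ Finset.Icc (a + 1) (b + 1),
            (Real.exp (-θv i) - Real.exp (-θv (i - 1))) *
              ((∫ ω, φ ω ∂(M (Function.update θv (i - 1) (θv (i - 1) - β))))
                - ∫ ω, φ ω ∂(M θv)) := by
  obtain ⟨C, hC⟩ := hbdd
  set S : Finset ℤ := Finset.Icc (a - 1) (b + 1) with hS
  -- dependence of φ on the coordinates in S
  have hdepS : ∀ ω ω' : ℤ → ℤ, (∀ j ∈ S, ω j = ω' j) → φ ω = φ ω' := by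
    intro ω ω' h
    exact hdep ω ω' fun j hj1 hj2 => h j (by simp [hS, Finset.mem_Icc]; omega)
  -- the representation of ∫ φ for every tilt η
  have hφW : ∀ η : ℤ → ℝ, Summable
      (fun c : {x // x ∈ S} → ℤ => |φ (extFn S c)| * Wt r S η c) := by
    intro η
    refine Summable.of_nonneg_of_le
      (fun c => mul_nonneg (abs_nonneg _) (Wt_nonneg hβ hr S η c))
      (fun c => mul_le_mul_of_nonneg_right (hC _) (Wt_nonneg hβ hr S η c))
      ((summable_Wt hβ hr (hM η) S).mul_left C)
  have hJ : ∀ η : ℤ → ℝ, ∫ ω, φ ω ∂(M η)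
      = ∑' c : {x // x ∈ S} → ℤ, φ (extFn S c) * Wt r S η c :=
    fun η => (cyl_rep hβ hr (hM η) S φ hmeas hdepS (hφW η)).2
  have hφsum : ∀ η : ℤ → ℝ, Summable
      (fun c : {x // x ∈ S} → ℤ => φ (extFn S c) * Wt r S η c) := by
    intro η
    apply Summable.of_abs
    apply ((hφW η)).congr
    intro c
    rw [abs_mul, abs_of_nonneg (Wt_nonneg hβ hr S η c)]
  -- J is unchanged when the tilt changes off [a,b]
  have hJcongr : ∀ η η' : ℤ → ℝ, (∀ j, a ≤ j → j ≤ b → η j = η' j) →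
      (∫ ω, φ ω ∂(M η)) = ∫ ω, φ ω ∂(M η') := by
    intro η η' hηη
    have hdep0 : ∀ ω ω' : ℤ → ℤ, (∀ j ∈ Finset.Icc a b, ω j = ω' j) → φ ω = φ ω' := by
      intro ω ω' h
      exact hdep ω ω' fun j hj1 hj2 => h j (by simp [Finset.mem_Icc]; omega)
    have hs1 := (cyl_rep hβ hr (hM η) (Finset.Icc a b) φ hmeas hdep0 (by
      refine Summable.of_nonneg_of_le
        (fun c => mul_nonneg (abs_nonneg _) (Wt_nonneg hβ hr _ η c))
        (fun c => mul_le_mul_of_nonneg_right (hC _) (Wt_nonneg hβ hr _ η c))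
        ((summable_Wt hβ hr (hM η) _).mul_left C))).2
    have hs2 := (cyl_rep hβ hr (hM η') (Finset.Icc a b) φ hmeas hdep0 (by
      refine Summable.of_nonneg_of_le
        (fun c => mul_nonneg (abs_nonneg _) (Wt_nonneg hβ hr _ η' c))
        (fun c => mul_le_mul_of_nonneg_right (hC _) (Wt_nonneg hβ hr _ η' c))
        ((summable_Wt hβ hr (hM η') _).mul_left C))).2
    rw [hs1, hs2]
    apply tsum_congr
    intro c
    congr 1
    refine Finset.prod_congr rfl fun x _ => ?_
    have hx := x.2
    simp only [Finset.mem_Icc] at hx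
    rw [hηη x.1 hx.1 hx.2]
  -- the per-site identity
  have hsite : ∀ i : ℤ, a - 1 ≤ i → i ≤ b →
      ∫ ω, (r (ω i) + r (-(ω (i + 1)))) * (φ (brickCfg ω i) - φ ω) ∂(M θv)
        = Real.exp (θv i) *
            ((∫ ω, φ ω ∂(M (Function.update θv (i + 1) (θv (i + 1) + β))))
              - ∫ ω, φ ω ∂(M (Function.update θv i (θv i + β))))
          + Real.exp (-(θv (i + 1))) *
            ((∫ ω, φ ω ∂(M (Function.update θv i (θv i - β))))
              - ∫ ω, φ ω ∂(M (Function.update θv (i + 1) (θv (i + 1) - β)))) := by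
    intro i hia hib
    have hiS : i ∈ S := by simp [hS, Finset.mem_Icc]; omega
    have hi1S : i + 1 ∈ S := by simp [hS, Finset.mem_Icc]; omega
    set e := shiftEquiv S i with he
    set ψ : (ℤ → ℤ) → ℝ :=
      fun ω => (r (ω i) + r (-(ω (i + 1)))) * (φ (brickCfg ω i) - φ ω) with hψ
    -- measurability
    have hbrickm : Measurable fun ω : ℤ → ℤ => brickCfg ω i := by
      apply measurable_pi_lambda
      intro j
      by_cases h1 : j = i
      · subst h1
        simp only [brickCfg, if_pos rfl]
        exact measurable_eval_int (fun z => z - 1) j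
      · by_cases h2 : j = i + 1
        · subst h2
          simp only [brickCfg, if_neg h1, if_pos rfl]
          exact measurable_eval_int (fun z => z + 1) (i + 1)
        · simp only [brickCfg, if_neg h1, if_neg h2]
          exact measurable_pi_apply _
    have hψm : Measurable ψ := by
      apply Measurable.mul
      · exact (measurable_eval_int (fun z => r z) i).add
          (measurable_eval_int (fun z => r (-z)) (i + 1))
      · exact ((hmeas.comp hbrickm).sub hmeas)
    -- dependence
    have hψdep : ∀ ω ω' : ℤ → ℤ, (∀ j ∈ S, ω j = ω' j) → ψ ω = ψ ω' := by
      intro ω ω' h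
      have hbr : φ (brickCfg ω i) = φ (brickCfg ω' i) := by
        apply hdep
        intro j hj1 hj2
        simp only [brickCfg]
        split_ifs with hji hji1
        · rw [h i hiS]
        · rw [h (i + 1) hi1S]
        · exact h j (by simp [hS, Finset.mem_Icc]; omega)
      rw [hψ]
      simp only
      rw [h i hiS, h (i + 1) hi1S, hbr, hdepS ω ω' h]
    -- behaviour on extended configurations
    have hEe : ∀ c : {x // x ∈ S} → ℤ, extFn S (e c) = brickCfg (extFn S c) i := by
      intro c
      funext j
      by_cases hjS : j ∈ S
      · by_cases h1 : j = i
        · subst h1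
          simp [extFn, brickCfg, he, shiftEquiv, hjS]
        · by_cases h2 : j = i + 1
          · subst h2
            have hne : (i + 1 : ℤ) ≠ i := by omega
            simp [extFn, brickCfg, he, shiftEquiv, hjS, hne, h1]
          · simp [extFn, brickCfg, he, shiftEquiv, hjS, h1, h2]
      · have h1 : j ≠ i := fun h => hjS (h ▸ hiS)
        have h2 : j ≠ i + 1 := fun h => hjS (h ▸ hi1S)
        simp only [brickCfg, if_neg h1, if_neg h2, extFn, dif_neg hjS]
    -- notation for the four tilts
    set θui : ℤ → ℝ := Function.update θv i (θv i + β) with hθui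
    set θui1 : ℤ → ℝ := Function.update θv (i + 1) (θv (i + 1) + β) with hθui1
    set θdi : ℤ → ℝ := Function.update θv i (θv i - β) with hθdi
    set θdi1 : ℤ → ℝ := Function.update θv (i + 1) (θv (i + 1) - β) with hθdi1
    -- weight identities
    have hW1 : ∀ c : {x // x ∈ S} → ℤ,
        r (c ⟨i, hiS⟩) * Wt r S θv c = Real.exp (θv i) * Wt r S θui c :=
      fun c => Wt_r_mul hβ hr S θv i hiS c
    have hW2 : ∀ c : {x // x ∈ S} → ℤ,
        r (-(c ⟨i + 1, hi1S⟩)) * Wt r S θv c = Real.exp (-(θv (i + 1))) * Wt r S θdi1 c :=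
      fun c => Wt_rneg_mul hβ hr S θv (i + 1) hi1S c
    have hW1' : ∀ c : {x // x ∈ S} → ℤ, Wt r S θui c = Wt r S θui1 (e c) := by
      intro c
      have := Wt_shift_up hβ hr S i θv (e c)
      rwa [Equiv.symm_apply_apply] at this
    have hW2' : ∀ c : {x // x ∈ S} → ℤ, Wt r S θdi1 c = Wt r S θdi (e c) := by
      intro c
      have := Wt_shift_dn hβ hr S i θv (e c)
      rwa [Equiv.symm_apply_apply] at this
    -- value of ψ on extended configurations
    have hψE : ∀ c : {x // x ∈ S} → ℤ, ψ (extFn S c)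
        = (r (c ⟨i, hiS⟩) + r (-(c ⟨i + 1, hi1S⟩))) * (φ (extFn S (e c)) - φ (extFn S c)) := by
      intro c
      rw [hψ]
      simp only
      rw [hEe c, show extFn S c i = c ⟨i, hiS⟩ from extFn_mem S c ⟨i, hiS⟩,
        show extFn S c (i + 1) = c ⟨i + 1, hi1S⟩ from extFn_mem S c ⟨i + 1, hi1S⟩]
    -- positivity of r
    have hrpos : ∀ z : ℤ, 0 < r z := fun z => by rw [hr]; positivity
    -- summability for cyl_rep for ψ
    have hψsum : Summable (fun c : {x // x ∈ S} → ℤ => |ψ (extFn S c)| * Wt r S θv c) := by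
      have hbound : ∀ c : {x // x ∈ S} → ℤ, |ψ (extFn S c)| * Wt r S θv c
          ≤ (2 * C) * (Real.exp (θv i) * Wt r S θui c
            + Real.exp (-(θv (i + 1))) * Wt r S θdi1 c) := by
        intro c
        rw [← hW1, ← hW2, hψE]
        have hWnn := Wt_nonneg hβ hr S θv c
        have h1 : |φ (extFn S (e c)) - φ (extFn S c)| ≤ 2 * C := by
          have := abs_sub (φ (extFn S (e c))) (φ (extFn S c))
          calc |φ (extFn S (e c)) - φ (extFn S c)|
              ≤ |φ (extFn S (e c))| + |φ (extFn S c)| := abs_sub _ _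
            _ ≤ C + C := add_le_add (hC _) (hC _)
            _ = 2 * C := by ring
        have h2 : 0 ≤ r (c ⟨i, hiS⟩) + r (-(c ⟨i + 1, hi1S⟩)) :=
          add_nonneg (hrpos _).le (hrpos _).le
        calc |(r (c ⟨i, hiS⟩) + r (-(c ⟨i + 1, hi1S⟩)))
              * (φ (extFn S (e c)) - φ (extFn S c))| * Wt r S θv c
            = (r (c ⟨i, hiS⟩) + r (-(c ⟨i + 1, hi1S⟩)))
              * |φ (extFn S (e c)) - φ (extFn S c)| * Wt r S θv c := by
              rw [abs_mul, abs_of_nonneg h2]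
          _ ≤ (r (c ⟨i, hiS⟩) + r (-(c ⟨i + 1, hi1S⟩))) * (2 * C) * Wt r S θv c := by
              apply mul_le_mul_of_nonneg_right _ hWnn
              exact mul_le_mul_of_nonneg_left h1 h2
          _ = (2 * C) * (r (c ⟨i, hiS⟩) * Wt r S θv c
              + r (-(c ⟨i + 1, hi1S⟩)) * Wt r S θv c) := by ring
      refine Summable.of_nonneg_of_le
        (fun c => mul_nonneg (abs_nonneg _) (Wt_nonneg hβ hr S θv c)) hbound ?_
      apply Summable.mul_left
      exact ((summable_Wt hβ hr (hM θui) S).mul_left _).add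
        ((summable_Wt hβ hr (hM θdi1) S).mul_left _)
    -- the cylinder representation of the integral
    have hrep := (cyl_rep hβ hr (hM θv) S ψ hψm hψdep hψsum).2
    -- decompose the summand
    have hdecomp : ∀ c : {x // x ∈ S} → ℤ, ψ (extFn S c) * Wt r S θv c
        = Real.exp (θv i) * (φ (extFn S (e c)) * Wt r S θui1 (e c))
          - Real.exp (θv i) * (φ (extFn S c) * Wt r S θui c)
          + (Real.exp (-(θv (i + 1))) * (φ (extFn S (e c)) * Wt r S θdi (e c))
            - Real.exp (-(θv (i + 1))) * (φ (extFn S c) * Wt r S θdi1 c)) := by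
      intro c
      rw [hψE c, ← hW1' c, ← hW2' c]
      have h1 := hW1 c
      have h2 := hW2 c
      linear_combination (φ (extFn S (e c)) - φ (extFn S c)) * h1
        + (φ (extFn S (e c)) - φ (extFn S c)) * h2
    -- the four summable pieces
    have hsum1 : Summable (fun c : {x // x ∈ S} → ℤ =>
        Real.exp (θv i) * (φ (extFn S (e c)) * Wt r S θui1 (e c))) := by
      apply Summable.mul_left
      exact (e.summable_iff
        (f := fun d : {x // x ∈ S} → ℤ => φ (extFn S d) * Wt r S θui1 d)).2 (hφsum θui1)
    have hsum2 : Summable (fun c : {x // x ∈ S} → ℤ =>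
        Real.exp (θv i) * (φ (extFn S c) * Wt r S θui c)) :=
      Summable.mul_left _ (hφsum θui)
    have hsum3 : Summable (fun c : {x // x ∈ S} → ℤ =>
        Real.exp (-(θv (i + 1))) * (φ (extFn S (e c)) * Wt r S θdi (e c))) := by
      apply Summable.mul_left
      exact (e.summable_iff
        (f := fun d : {x // x ∈ S} → ℤ => φ (extFn S d) * Wt r S θdi d)).2 (hφsum θdi)
    have hsum4 : Summable (fun c : {x // x ∈ S} → ℤ =>
        Real.exp (-(θv (i + 1))) * (φ (extFn S c) * Wt r S θdi1 c)) :=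
      Summable.mul_left _ (hφsum θdi1)
    -- compute the tsums of the pieces
    have ht1 : ∑' c : {x // x ∈ S} → ℤ,
        Real.exp (θv i) * (φ (extFn S (e c)) * Wt r S θui1 (e c))
        = Real.exp (θv i) * ∫ ω, φ ω ∂(M θui1) := by
      rw [tsum_mul_left, hJ θui1]
      congr 1
      exact e.tsum_eq (fun d => φ (extFn S d) * Wt r S θui1 d)
    have ht2 : ∑' c : {x // x ∈ S} → ℤ,
        Real.exp (θv i) * (φ (extFn S c) * Wt r S θui c)
        = Real.exp (θv i) * ∫ ω, φ ω ∂(M θui) := by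
      rw [tsum_mul_left, hJ θui]
    have ht3 : ∑' c : {x // x ∈ S} → ℤ,
        Real.exp (-(θv (i + 1))) * (φ (extFn S (e c)) * Wt r S θdi (e c))
        = Real.exp (-(θv (i + 1))) * ∫ ω, φ ω ∂(M θdi) := by
      rw [tsum_mul_left, hJ θdi]
      congr 1
      exact e.tsum_eq (fun d => φ (extFn S d) * Wt r S θdi d)
    have ht4 : ∑' c : {x // x ∈ S} → ℤ,
        Real.exp (-(θv (i + 1))) * (φ (extFn S c) * Wt r S θdi1 c)
        = Real.exp (-(θv (i + 1))) * ∫ ω, φ ω ∂(M θdi1) := by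
      rw [tsum_mul_left, hJ θdi1]
    -- put it together
    rw [show (∫ ω, (r (ω i) + r (-(ω (i + 1)))) * (φ (brickCfg ω i) - φ ω) ∂(M θv))
      = ∫ ω, ψ ω ∂(M θv) from rfl, hrep, tsum_congr hdecomp,
      (hsum1.sub hsum2).tsum_add (hsum3.sub hsum4),
      hsum1.tsum_sub hsum2, hsum3.tsum_sub hsum4, ht1, ht2, ht3, ht4]
    ring
  -- now the telescoping argument
  set J : (ℤ → ℝ) → ℝ := fun η => ∫ ω, φ ω ∂(M η) with hJdef
  set g : ℤ → ℝ := fun j => J (Function.update θv j (θv j + β)) - J θv with hg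
  set h : ℤ → ℝ := fun j => J (Function.update θv j (θv j - β)) - J θv with hh
  have hga : g (a - 1) = 0 := by
    have hc := hJcongr (Function.update θv (a - 1) (θv (a - 1) + β)) θv
      (fun j hj1 hj2 => Function.update_of_ne (by omega) _ _)
    simp only [hg, hJdef]
    rw [hc, sub_self]
  have hgb : g (b + 1) = 0 := by
    have hc := hJcongr (Function.update θv (b + 1) (θv (b + 1) + β)) θv
      (fun j hj1 hj2 => Function.update_of_ne (by omega) _ _)
    simp only [hg, hJdef]
    rw [hc, sub_self]
  have hha : h (a - 1) = 0 := by
    have hc := hJcongr (Function.update θv (a - 1) (θv (a - 1) - β)) θv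
      (fun j hj1 hj2 => Function.update_of_ne (by omega) _ _)
    simp only [hh, hJdef]
    rw [hc, sub_self]
  have hhb : h (b + 1) = 0 := by
    have hc := hJcongr (Function.update θv (b + 1) (θv (b + 1) - β)) θv
      (fun j hj1 hj2 => Function.update_of_ne (by omega) _ _)
    simp only [hh, hJdef]
    rw [hc, sub_self]
  have hLHS : ∑ i ∈ Finset.Icc (a - 1) b,
      (∫ ω, (r (ω i) + r (-(ω (i + 1)))) * (φ (brickCfg ω i) - φ ω) ∂(M θv))
      = ∑ i ∈ Finset.Icc (a - 1) b,
        (Real.exp (θv i) * (g (i + 1) - g i)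
          + Real.exp (-(θv (i + 1))) * (h i - h (i + 1))) := by
    apply Finset.sum_congr rfl
    intro i hi
    simp only [Finset.mem_Icc] at hi
    rw [hsite i hi.1 hi.2, hg, hh]
    simp only
    ring
  rw [hLHS, Finset.sum_add_distrib,
    tele1 a b hab (fun j => Real.exp (θv j)) g hga hgb,
    tele2 a b hab (fun j => Real.exp (-(θv j))) h hha hhb]
  have hR1 : ∑ i ∈ Finset.Icc (a - 1) (b - 1),
      (Real.exp (θv i) - Real.exp (θv (i + 1))) *
        ((∫ ω, φ ω ∂(M (Function.update θv (i + 1) (θv (i + 1) + β))))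
          - ∫ ω, φ ω ∂(M θv))
      = ∑ i ∈ Finset.Icc a b, (Real.exp (θv (i - 1)) - Real.exp (θv i)) * g i := by
    rw [sum_shift_Icc (a - 1) (b - 1) 1]
    rw [show a - 1 + 1 = a by ring, show b - 1 + 1 = b by ring]
    apply Finset.sum_congr rfl
    intro i _
    rw [hg]
    simp only
    rw [show i - 1 + 1 = i by ring]
  have hR2 : ∑ i ∈ Finset.Icc (a + 1) (b + 1),
      (Real.exp (-θv i) - Real.exp (-θv (i - 1))) *
        ((∫ ω, φ ω ∂(M (Function.update θv (i - 1) (θv (i - 1) - β))))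
          - ∫ ω, φ ω ∂(M θv))
      = ∑ i ∈ Finset.Icc a b, (Real.exp (-(θv (i + 1))) - Real.exp (-(θv i))) * h i := by
    rw [sum_shift_Icc (a + 1) (b + 1) (-1)]
    rw [show a + 1 + -1 = a by ring, show b + 1 + -1 = b by ring]
    apply Finset.sum_congr rfl
    intro i _
    rw [hh]
    simp only
    rw [show i - -1 = i + 1 by ring, show i + 1 - 1 = i by ring]
  rw [hR1, hR2]
end
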